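/- For any finite simple graph G, vertex o, and complex z with Re(z) > 0, the quantity R_z(G,o) = z·Z_{G−o}(z)/Z_G(z) satisfies |R_z(G,o)| ≤ |z|/Re(z). -/

import Mathlib

open Finset
open scoped Classical

/-- The set of matchings (dimeric configurations) of `G` using only vertices of `S`. -/
noncomputable def matchingsOn {V : Type*} (G : SimpleGraph V) (S : Finset V) :
    Finset (Finset (Sym2 V)) :=
  S.sym2.powerset.filter fun D =>
    (∀ e ∈ D, e ∈ G.edgeSet) ∧
      (D : Set (Sym2 V)).Pairwise fun e f => ∀ v, v ∈ e → v ∉ f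

/-- Monomer-dimer partition function with complex activity `z`. -/
noncomputable def Zc {V : Type*} (G : SimpleGraph V) (S : Finset V) (z : ℂ) : ℂ :=
  ∑ D ∈ matchingsOn G S, z ^ (S.card - 2 * D.card)

set_option linter.unusedSectionVars false

section Aux
variable {V : Type*} (G : SimpleGraph V)

lemma mem_matchingsOn {D : Finset (Sym2 V)} {S : Finset V} :
    D ∈ matchingsOn G S ↔ (∀ e ∈ D, ∀ v ∈ e, v ∈ S) ∧ (∀ e ∈ D, e ∈ G.edgeSet) ∧
      (D : Set (Sym2 V)).Pairwise fun e f => ∀ v, v ∈ e → v ∉ f := by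
  simp [matchingsOn, Finset.subset_iff, Finset.mem_sym2_iff]

noncomputable def epts : Sym2 V → Finset V :=
  Sym2.lift ⟨fun a b => ({a, b} : Finset V), fun a b => by simp [Finset.pair_comm]⟩

lemma mem_epts {e : Sym2 V} {v : V} : v ∈ epts e ↔ v ∈ e := by
  induction e using Sym2.ind with
  | _ a b => simp [epts, Sym2.mem_iff]

lemma card_epts {e : Sym2 V} (he : ¬ e.IsDiag) : (epts e).card = 2 := by
  induction e using Sym2.ind with
  | _ a b =>
    have : a ≠ b := by simpa using he
    simp [epts, Finset.card_insert_of_notMem, this]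

lemma two_mul_card_le {D : Finset (Sym2 V)} {S : Finset V}
    (hD : D ∈ matchingsOn G S) : 2 * D.card ≤ S.card := by
  classical
  rw [mem_matchingsOn] at hD
  obtain ⟨hsub, hedge, hpair⟩ := hD
  have hdisj : ∀ e ∈ D, ∀ f ∈ D, e ≠ f → Disjoint (epts e) (epts f) := by
    intro e he f hf hef
    rw [Finset.disjoint_left]
    intro v hv hv'
    exact hpair he hf hef v (mem_epts.1 hv) (mem_epts.1 hv')
  calc 2 * D.card = ∑ e ∈ D, (epts e).card := by
        rw [Finset.sum_congr rfl (fun e he => card_epts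
          (SimpleGraph.not_isDiag_of_mem_edgeSet G (hedge e he)))]
        simp [mul_comm]
    _ = (D.biUnion epts).card := (Finset.card_biUnion hdisj).symm
    _ ≤ S.card := Finset.card_le_card (by
        intro v hv
        obtain ⟨e, he, hv⟩ := Finset.mem_biUnion.1 hv
        exact hsub e he v (mem_epts.1 hv))



variable [DecidableEq V]

lemma matchingsOn_erase {S : Finset V} {o : V} :
    (matchingsOn G S).filter (fun D => ¬ ∃ e ∈ D, o ∈ e) = matchingsOn G (S.erase o) := by
  ext D
  simp only [Finset.mem_filter, mem_matchingsOn, Finset.mem_erase, not_exists, not_and]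
  constructor
  · rintro ⟨⟨h1, h2, h3⟩, h4⟩
    exact ⟨fun e he v hv => ⟨fun hvo => h4 e he (hvo ▸ hv), h1 e he v hv⟩, h2, h3⟩
  · rintro ⟨h1, h2, h3⟩
    exact ⟨⟨fun e he v hv => (h1 e he v hv).2, h2, h3⟩,
      fun e he ho => (h1 e he o ho).1 rfl⟩

lemma rel_symm : Symmetric (fun e f : Sym2 V => ∀ v, v ∈ e → v ∉ f) :=
  fun _ _ h v hv hv' => h v hv' hv

lemma sum_covered {S : Finset V} {o : V} (ho : o ∈ S) (z : ℂ) :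
    ∑ D ∈ (matchingsOn G S).filter (fun D => ∃ e ∈ D, o ∈ e),
      z ^ (S.card - 2 * D.card) =
    ∑ p ∈ ((S.erase o).filter (G.Adj o)).sigma
        (fun v => matchingsOn G ((S.erase o).erase v)),
      z ^ (S.card - 2 * (p.2.card + 1)) := by
  symm
  refine Finset.sum_bij (fun p _ => insert s(o, p.1) p.2) ?_ ?_ ?_ ?_
  · rintro ⟨v, D⟩ hp
    simp only [Finset.mem_sigma, Finset.mem_filter, Finset.mem_erase] at hp
    obtain ⟨⟨⟨hvo, hvS⟩, hadj⟩, hD⟩ := hp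
    rw [mem_matchingsOn] at hD
    obtain ⟨h1, h2, h3⟩ := hD
    have hnot : ∀ f ∈ D, ∀ u, u ∈ s(o, v) → u ∉ f := by
      intro f hf u hu hf'
      have := h1 f hf u hf'
      simp only [Finset.mem_erase] at this
      rcases Sym2.mem_iff.1 hu with rfl | rfl
      · exact this.2.1 rfl
      · exact this.1 rfl
    have hni : s(o, v) ∉ D := fun h => (hnot _ h o (Sym2.mem_mk_left o v)) (Sym2.mem_mk_left o v)
    rw [Finset.mem_filter]
    constructor
    · rw [mem_matchingsOn]
      refine ⟨?_, ?_, ?_⟩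
      · intro e he u hu
        rcases Finset.mem_insert.1 he with rfl | he
        · rcases Sym2.mem_iff.1 hu with rfl | rfl
          · exact ho
          · exact hvS
        · have := h1 e he u hu
          simp only [Finset.mem_erase] at this
          exact this.2.2
      · intro e he
        rcases Finset.mem_insert.1 he with rfl | he
        · exact hadj
        · exact h2 e he
      · rw [Finset.coe_insert]
        exact Set.pairwise_insert.2 ⟨h3, fun f hf _ => ⟨hnot f hf, fun u hu hu' => hnot f hf u hu' hu⟩⟩
    · exact ⟨s(o, v), Finset.mem_insert_self _ _, Sym2.mem_mk_left o v⟩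
  · rintro ⟨v, D⟩ hp ⟨w, E⟩ hq heq
    replace heq : insert s(o, v) D = insert s(o, w) E := heq
    simp only [Finset.mem_sigma, Finset.mem_filter, Finset.mem_erase] at hp hq
    have hoD : ∀ f ∈ D, o ∉ f := by
      intro f hf hof
      have := (mem_matchingsOn G).1 hp.2 |>.1 f hf o hof
      simp at this
    have hoE : ∀ f ∈ E, o ∉ f := by
      intro f hf hof
      have := (mem_matchingsOn G).1 hq.2 |>.1 f hf o hof
      simp at this
    have hmem : s(o, v) ∈ insert s(o, w) E := heq ▸ Finset.mem_insert_self _ _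
    have hvw : v = w := by
      rcases Finset.mem_insert.1 hmem with h | h
      · rcases Sym2.eq_iff.1 h with ⟨_, h⟩ | ⟨h1, h2⟩
        · exact h
        · exact h2.trans h1
      · exact absurd (Sym2.mem_mk_left o v) (hoE _ h)
    subst hvw
    have hDE : D = E := by
      have h1 : s(o, v) ∉ D := fun h => hoD _ h (Sym2.mem_mk_left o v)
      have h2 : s(o, v) ∉ E := fun h => hoE _ h (Sym2.mem_mk_left o v)
      rw [← Finset.erase_insert h1, ← Finset.erase_insert h2, heq]
    subst hDE
    rfl
  · intro D hD
    rw [Finset.mem_filter] at hD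
    obtain ⟨hD, e, he, hoe⟩ := hD
    obtain ⟨v, rfl⟩ : ∃ v, e = s(o, v) := ⟨Sym2.Mem.other hoe, (Sym2.other_spec hoe).symm⟩
    rw [mem_matchingsOn] at hD
    obtain ⟨h1, h2, h3⟩ := hD
    have hadj : G.Adj o v := (SimpleGraph.mem_edgeSet G).1 (h2 _ he)
    have hvS : v ∈ S := h1 _ he v (Sym2.mem_mk_right o v)
    refine ⟨⟨v, D.erase s(o, v)⟩, ?_, Finset.insert_erase he⟩
    simp only [Finset.mem_sigma, Finset.mem_filter, Finset.mem_erase]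
    refine ⟨⟨⟨hadj.ne', hvS⟩, hadj⟩, ?_⟩
    rw [mem_matchingsOn]
    refine ⟨?_, fun f hf => h2 f (Finset.mem_of_mem_erase hf), ?_⟩
    · intro f hf u hu
      have hfD := Finset.mem_of_mem_erase hf
      have hne : s(o, v) ≠ f := fun h => (Finset.mem_erase.1 hf).1 h.symm
      have hdisj := h3 he hfD hne
      simp only [Finset.mem_erase]
      refine ⟨fun h => hdisj u (by rw [h]; exact Sym2.mem_mk_right o v) hu,
        fun h => hdisj u (by rw [h]; exact Sym2.mem_mk_left o v) hu, h1 f hfD u hu⟩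
    · exact h3.mono (by exact_mod_cast Finset.erase_subset _ _)
  · rintro ⟨v, D⟩ hp
    simp only [Finset.mem_sigma, Finset.mem_filter, Finset.mem_erase] at hp
    have hni : s(o, v) ∉ D := by
      intro h
      have := (mem_matchingsOn G).1 hp.2 |>.1 _ h o (Sym2.mem_mk_left o v)
      simp at this
    rw [Finset.card_insert_of_notMem hni]


lemma Zc_recursion {S : Finset V} {o : V} (ho : o ∈ S) (z : ℂ) :
    Zc G S z = z * Zc G (S.erase o) z +
      ∑ v ∈ (S.erase o).filter (G.Adj o), Zc G ((S.erase o).erase v) z := by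
  have hsplit := (Finset.sum_filter_add_sum_filter_not (matchingsOn G S)
      (fun D => ∃ e ∈ D, o ∈ e) (fun D => z ^ (S.card - 2 * D.card))).symm
  rw [Zc]
  rw [hsplit, sum_covered G ho z, matchingsOn_erase]
  have hScard : (S.erase o).card + 1 = S.card := Finset.card_erase_add_one ho
  have h1 : ∑ D ∈ matchingsOn G (S.erase o), z ^ (S.card - 2 * D.card)
      = z * Zc G (S.erase o) z := by
    rw [Zc, Finset.mul_sum]
    refine Finset.sum_congr rfl fun D hD => ?_
    have := two_mul_card_le G hD
    have hexp : S.card - 2 * D.card = ((S.erase o).card - 2 * D.card) + 1 := by omega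
    rw [hexp, pow_succ, mul_comm]
  have h2 : ∑ p ∈ ((S.erase o).filter (G.Adj o)).sigma
        (fun v => matchingsOn G ((S.erase o).erase v)),
      z ^ (S.card - 2 * (p.2.card + 1))
      = ∑ v ∈ (S.erase o).filter (G.Adj o), Zc G ((S.erase o).erase v) z := by
    rw [Finset.sum_sigma]
    refine Finset.sum_congr rfl fun v hv => ?_
    rw [Zc]
    refine Finset.sum_congr rfl fun D hD => ?_
    have hle := two_mul_card_le G hD
    have hv' : v ∈ S.erase o := (Finset.mem_filter.1 hv).1
    have hc1 : ((S.erase o).erase v).card + 1 = (S.erase o).card :=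
      Finset.card_erase_add_one hv'
    have hexp : S.card - 2 * (D.card + 1) = ((S.erase o).erase v).card - 2 * D.card := by
      omega
    rw [hexp]
  rw [h1, h2, add_comm]

lemma Zc_empty (z : ℂ) : Zc G (∅ : Finset V) z = 1 := by
  have hm : matchingsOn G (∅ : Finset V) = {∅} := by
    ext D
    simp only [mem_matchingsOn, Finset.mem_singleton]
    constructor
    · rintro ⟨h1, -, -⟩
      rw [Finset.eq_empty_iff_forall_notMem]
      intro e he
      induction e using Sym2.ind with
      | _ a b => exact absurd (h1 _ he a (Sym2.mem_mk_left a b)) (Finset.notMem_empty a)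
    · rintro rfl
      simp
  simp [Zc, hm]

lemma Zc_key {z : ℂ} (hz : 0 < z.re) (S : Finset V) :
    Zc G S z ≠ 0 ∧ ∀ o ∈ S, z.re ≤ (Zc G S z / Zc G (S.erase o) z).re := by
  induction S using Finset.strongInduction with
  | _ S ih =>
    rcases eq_empty_or_nonempty S with rfl | hS
    · simp [Zc_empty]
    have key : ∀ o ∈ S, Zc G S z ≠ 0 ∧ z.re ≤ (Zc G S z / Zc G (S.erase o) z).re := by
      intro o ho
      have ihe := ih (S.erase o) (Finset.erase_ssubset ho)
      set N := (S.erase o).filter (G.Adj o) with hN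
      set W := z + ∑ v ∈ N, Zc G ((S.erase o).erase v) z / Zc G (S.erase o) z with hW
      have hWre : z.re ≤ W.re := by
        rw [hW, Complex.add_re, Complex.re_sum]
        have : ∀ v ∈ N, 0 ≤ (Zc G ((S.erase o).erase v) z / Zc G (S.erase o) z).re := by
          intro v hv
          have hv' : v ∈ S.erase o := (Finset.mem_filter.1 hv).1
          have hre := ihe.2 v hv'
          have hinv : Zc G ((S.erase o).erase v) z / Zc G (S.erase o) z
              = (Zc G (S.erase o) z / Zc G ((S.erase o).erase v) z)⁻¹ := by
            rw [inv_div]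
          rw [hinv, Complex.inv_re]
          exact div_nonneg (by linarith) (Complex.normSq_nonneg _)
        have hsum : 0 ≤ ∑ v ∈ N, (Zc G ((S.erase o).erase v) z / Zc G (S.erase o) z).re :=
          Finset.sum_nonneg this
        linarith
      have hWne : W ≠ 0 := by
        intro h
        rw [h] at hWre
        simp at hWre
        linarith
      have hfac : Zc G S z = Zc G (S.erase o) z * W := by
        rw [Zc_recursion G ho z, hW, mul_add, Finset.mul_sum]
        congr 1
        · ring
        · refine Finset.sum_congr rfl fun v hv => ?_
          rw [mul_comm, div_mul_cancel₀ _ ihe.1]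
      refine ⟨by rw [hfac]; exact mul_ne_zero ihe.1 hWne, ?_⟩
      rw [hfac, mul_comm, mul_div_assoc, div_self ihe.1, mul_one]
      exact hWre
    obtain ⟨o, ho⟩ := hS
    exact ⟨(key o ho).1, fun o' ho' => (key o' ho').2⟩


end Aux

/-- for `Re z > 0`, `|R_z(G,o)| ≤ |z|/Re z` where
`R_z(G,o) = z · Z_{G−o}(z)/Z_G(z)`. -/
theorem stmt_4 {V : Type*} [Fintype V] [DecidableEq V] (G : SimpleGraph V) (o : V)
    (z : ℂ) (hz : 0 < z.re) :
    ‖z * Zc G (Finset.univ.erase o) z / Zc G Finset.univ z‖ ≤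
      ‖z‖ / z.re := by
  have key := Zc_key G hz (Finset.univ : Finset V)
  set w := Zc G Finset.univ z / Zc G (Finset.univ.erase o) z with hw
  have hre : z.re ≤ w.re := key.2 o (Finset.mem_univ o)
  have hwabs : z.re ≤ ‖w‖ := le_trans hre (Complex.re_le_norm w)
  have heq : z * Zc G (Finset.univ.erase o) z / Zc G Finset.univ z = z / w := by
    rw [hw, div_div_eq_mul_div]
  rw [heq, norm_div]
  gcongr
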